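/- For every n ≥ 1, let 𝒜_n = {0, 1, …, n} and let ℱ_n consist of all palindromes of length 2n+1 over 𝒜_n together with all words iii of three consecutive equal letters (i ∈ 𝒜_n). Then player A has a winning strategy in the no-pass Domino game Γ*(𝒜_n, ℱ_n, ℤ), in which each player on their turn must colour an uncoloured cell of ℤ (passing is not allowed), players alternate with A first, and A wins if a translate of some pattern of ℱ_n ever occurs in the coloured pattern. -/

import Mathlib

open Filter Topology

attribute [local instance] Classical.propDecidable

/-- The two players. -/
inductive Player | A | B
deriving DecidableEq

/-- A (possibly partial) colouring of `ℤ`: `none` means uncoloured.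
Colours are natural numbers; the alphabet of size `m` is `{0, …, m-1}`. -/
abbrev BoardZ := ℤ → Option ℕ

/-- A finite pattern on `ℤ`, encoded as a list of tiles (cell, colour). -/
abbrev PatternZ := List (ℤ × ℕ)

/-- A move: `none` is a pass, `some (i, a)` colours cell `i` with colour `a`. -/
abbrev MoveZ := Option (ℤ × ℕ)

/-- A (positional) strategy: a move for every position. -/
abbrev StrategyZ := BoardZ → MoveZ

/-- The pattern `p` occurs in the board `x` translated by `t`. -/
def occursAtZ (p : PatternZ) (x : BoardZ) (t : ℤ) : Prop :=
  ∀ q ∈ p, x (t + q.1) = some q.2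

/-- A position is final when a translate of some forbidden pattern occurs. -/
def isFinalZ (F : Set PatternZ) (x : BoardZ) : Prop :=
  ∃ p ∈ F, ∃ t : ℤ, occursAtZ p x t

/-- A colouring move: an uncoloured cell of `ℤ` receives a colour of the alphabet
`{0, …, m-1}` (a pass is not a colouring move). -/
def legalColour (m : ℕ) (x : BoardZ) : MoveZ → Prop
  | none => False
  | some (i, a) => x i = none ∧ a < m

/-- Legality of a move in the game with passes allowed. -/
def legalZ (m : ℕ) (x : BoardZ) (mv : MoveZ) : Prop :=
  mv = none ∨ legalColour m x mv

def applyZ (x : BoardZ) : MoveZ → BoardZ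
  | none => x
  | some (i, a) => Function.update x i (some a)

/-- One step of the game: the move proposed by the strategy is played if legal
(an illegal move is treated as a pass). -/
noncomputable def stepZ (m : ℕ) (st : StrategyZ) (x : BoardZ) : BoardZ :=
  if legalZ m x (st x) then applyZ x (st x) else x

/-- The play generated by strategies `stA`, `stB` with turn order `s`,
starting from the empty board. -/
noncomputable def playZ (m : ℕ) (s : ℕ → Player) (stA stB : StrategyZ) : ℕ → BoardZ
  | 0 => fun _ => none
  | t + 1 => stepZ m (match s t with | .A => stA | .B => stB) (playZ m s stA stB t)

/-- The alternating turn order: `A` plays first. -/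
def alt : ℕ → Player := fun t => if t % 2 = 0 then .A else .B

/-- A strategy for the no-pass game: on every board having an uncoloured cell,
it plays a legal colouring move (never a pass). -/
def NoPassStrategy (m : ℕ) (st : StrategyZ) : Prop :=
  ∀ x : BoardZ, (∃ i : ℤ, x i = none) → legalColour m x (st x)

/-- The forbidden patterns `ℱ_n`: all palindromes of length `2n+1` over the alphabet
`{0, …, n}`, together with all triples `iii` of three consecutive equal letters. -/
def Fpal (n : ℕ) : Set PatternZ :=
  {p | ∃ w : ℕ → ℕ, (∀ l ≤ 2 * n, w l ≤ n) ∧ (∀ l ≤ 2 * n, w l = w (2 * n - l)) ∧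
        p = (List.range (2 * n + 1)).map (fun l : ℕ => ((l : ℤ), w l))} ∪
  {p | ∃ i ≤ n, p = [((0 : ℤ), i), ((1 : ℤ), i), ((2 : ℤ), i)]}


/-! ### Auxiliary development for Statement 19 -/

namespace Pal19

/-- Update a board by colouring cell `i` with colour `a`. -/
noncomputable abbrev updB (x : BoardZ) (i : ℤ) (a : ℕ) : BoardZ :=
  Function.update x i (some a)

lemma updB_apply (x : BoardZ) (i : ℤ) (a : ℕ) (z : ℤ) :
    updB x i a z = if z = i then some a else x z := by
  simp [updB, Function.update_apply]

lemma updB_ne_none (x : BoardZ) (i : ℤ) (a : ℕ) (z : ℤ) :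
    updB x i a z ≠ none ↔ (z = i ∨ x z ≠ none) := by
  rw [updB_apply]
  split_ifs with h
  · simp [h]
  · simp [h]

/-- The "win now" guard: some legal move completes a forbidden pattern. -/
abbrev WG (n : ℕ) (x : BoardZ) : Prop :=
  ∃ ia : ℤ × ℕ, (x ia.1 = none ∧ ia.2 < n + 1) ∧ isFinalZ (Fpal n) (updB x ia.1 ia.2)

lemma updB_comm (x : BoardZ) (i : ℤ) (a : ℕ) (j : ℤ) (b : ℕ) (h : i ≠ j) :
    updB (updB x i a) j b = updB (updB x j b) i a :=
  Function.update_comm h _ _ _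

/-- Player A's strategy. -/
noncomputable def strat (n : ℕ) : StrategyZ := fun x =>
  if hW : WG n x then
    some (Classical.choose hW)
  else if ∀ z, x z = none then some (0, 0)
  else if hP : ∃ i : ℤ, i ≠ 0 ∧ (∀ z : ℤ, x z ≠ none ↔ (z = 0 ∨ z = i)) then
    if Classical.choose hP = 1 ∨ Classical.choose hP = -1 then
      some (3 * Classical.choose hP, min ((x (Classical.choose hP)).getD 0) n)
    else if 0 < Classical.choose hP then
      some (Classical.choose hP + 1, min ((x (Classical.choose hP)).getD 0) n)
    else some (Classical.choose hP - 1, min ((x (Classical.choose hP)).getD 0) n)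
  else if hM : ∃ pm : ℤ × ℕ, 1 ≤ pm.2 ∧
      (∀ z : ℤ, x z ≠ none ↔ (pm.1 ≤ z ∧ z ≤ pm.1 + (2 * pm.2 + 1))) ∧
      (pm.1 + pm.2 = 2 ∨ pm.1 + pm.2 = -2 ∨ pm.1 + pm.2 + 1 = 2 ∨ pm.1 + pm.2 + 1 = -2) then
    if (Classical.choose hM).1 + ((Classical.choose hM).2 : ℤ) = 2 ∨
        (Classical.choose hM).1 + ((Classical.choose hM).2 : ℤ) = -2 then
      some (2 * ((Classical.choose hM).1 + ((Classical.choose hM).2 : ℤ)) -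
          ((Classical.choose hM).1 + 2 * ((Classical.choose hM).2 : ℤ) + 1),
        min ((x ((Classical.choose hM).1 + 2 * ((Classical.choose hM).2 : ℤ) + 1)).getD 0) n)
    else
      some (2 * ((Classical.choose hM).1 + ((Classical.choose hM).2 : ℤ) + 1) - (Classical.choose hM).1,
        min ((x ((Classical.choose hM).1)).getD 0) n)
  else if hJ : ∃ pkj : (ℤ × ℕ) × ℤ, 2 ≤ pkj.1.2 ∧
      (pkj.2 < pkj.1.1 - 1 ∨ pkj.1.1 + 2 * pkj.1.2 + 1 < pkj.2) ∧
      (pkj.1.1 + pkj.1.2 = 2 ∨ pkj.1.1 + pkj.1.2 = -2) ∧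
      x (pkj.2 - 1) = none ∧ x (pkj.2 + 1) = none ∧
      (∀ z : ℤ, x z ≠ none ↔ ((pkj.1.1 ≤ z ∧ z ≤ pkj.1.1 + 2 * pkj.1.2) ∨ z = pkj.2)) then
    if (Classical.choose hJ).1.1 + ((Classical.choose hJ).1.2 : ℤ) < (Classical.choose hJ).2 then
      some ((Classical.choose hJ).2 + 1, min ((x ((Classical.choose hJ).2)).getD 0) n)
    else some ((Classical.choose hJ).2 - 1, min ((x ((Classical.choose hJ).2)).getD 0) n)
  else if hD : ∃ i : ℤ, x i = none then some (Classical.choose hD, 0)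
  else none

/-- A completed triple gives a final position. -/
lemma final_triple {n : ℕ} {x : BoardZ} {t : ℤ} {w : ℕ} (hw : w ≤ n)
    (h0 : x t = some w) (h1 : x (t + 1) = some w) (h2 : x (t + 2) = some w) :
    isFinalZ (Fpal n) x := by
  refine ⟨[((0 : ℤ), w), ((1 : ℤ), w), ((2 : ℤ), w)], Or.inr ⟨w, hw, rfl⟩, t, ?_⟩
  intro q hq
  simp only [List.mem_cons, List.not_mem_nil, or_false] at hq
  rcases hq with h | h | h <;> subst h
  · simpa using h0
  · simpa using h1
  · simpa using h2

/-- A symmetric fully-coloured window of radius `n` around `γ` gives a final position. -/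
lemma final_pal {n : ℕ} {x : BoardZ} {γ : ℤ} {c : ℕ → ℕ} (hc : ∀ j, c j ≤ n)
    (h : ∀ l : ℕ, l ≤ 2 * n → x (γ - n + l) = some (c ((l : ℤ) - n).natAbs)) :
    isFinalZ (Fpal n) x := by
  refine ⟨_, Or.inl ⟨fun l => c (((l : ℤ) - n).natAbs), fun l _ => hc _, ?_, rfl⟩, γ - n, ?_⟩
  · intro l hl
    have h2 : ((l : ℤ) - n).natAbs = (((2 * n - l : ℕ) : ℤ) - n).natAbs := by omega
    show c _ = c _
    rw [h2]
  · intro q hq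
    simp only [List.mem_map, List.mem_range] at hq
    obtain ⟨l, hl, rfl⟩ := hq
    simpa using h l (by omega)


/-- Evaluation of one game step when the strategy proposes a legal colouring move. -/
lemma stepZ_eq {m : ℕ} {st : StrategyZ} {x : BoardZ} {i : ℤ} {a : ℕ}
    (hst : st x = some (i, a)) (hi : x i = none) (ha : a < m) :
    stepZ m st x = updB x i a := by
  have hleg : legalZ m x (st x) := Or.inr (by rw [hst]; exact ⟨hi, ha⟩)
  rw [stepZ, if_pos hleg, hst]
  rfl

/-- What a no-pass strategy's move does to the board. -/
lemma Bstep {m : ℕ} {stB : StrategyZ} (hB : NoPassStrategy m stB) (x : BoardZ)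
    (he : ∃ i, x i = none) :
    ∃ i a, x i = none ∧ a < m ∧ stepZ m stB x = updB x i a := by
  have h := hB x he
  cases hmv : stB x with
  | none => rw [hmv] at h; exact absurd h (by simp [legalColour])
  | some ia =>
    rw [hmv] at h
    obtain ⟨i, a⟩ := ia
    obtain ⟨hi, ha⟩ := h
    exact ⟨i, a, hi, ha, stepZ_eq hmv hi ha⟩

section StratLemmas

variable {n : ℕ} {x : BoardZ}

lemma strat_W (hW : WG n x) : strat n x = some (Classical.choose hW) := by
  rw [strat, dif_pos hW]

lemma strat_W_step (hW : WG n x) :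
    isFinalZ (Fpal n) (stepZ (n + 1) (strat n) x) := by
  obtain ⟨⟨hnone, hlt⟩, hfin⟩ := Classical.choose_spec hW
  rw [stepZ_eq (strat_W hW) hnone hlt]
  exact hfin

lemma strat_empty (hW : ¬ WG n x) (hE : ∀ z, x z = none) : strat n x = some (0, 0) := by
  rw [strat, dif_neg hW, if_pos hE]

lemma strat_P2 (hW : ¬ WG n x) {i₀ : ℤ} {w : ℕ} (h0 : i₀ ≠ 0)
    (hiff : ∀ z : ℤ, x z ≠ none ↔ (z = 0 ∨ z = i₀)) (hx : x i₀ = some w) (hw : w ≤ n) :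
    strat n x = some (if i₀ = 1 ∨ i₀ = -1 then 3 * i₀ else if 0 < i₀ then i₀ + 1 else i₀ - 1, w) := by
  have hE : ¬ ∀ z, x z = none := by
    intro hE
    exact ((hiff 0).mpr (Or.inl rfl)) (hE 0)
  have hP : ∃ i : ℤ, i ≠ 0 ∧ (∀ z : ℤ, x z ≠ none ↔ (z = 0 ∨ z = i₀)) := ⟨i₀, h0, hiff⟩
  have hP' : ∃ i : ℤ, i ≠ 0 ∧ (∀ z : ℤ, x z ≠ none ↔ (z = 0 ∨ z = i)) := ⟨i₀, h0, hiff⟩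
  rw [strat, dif_neg hW, if_neg hE, dif_pos hP']
  have hpin : Classical.choose hP' = i₀ := by
    obtain ⟨hne, hiff'⟩ := Classical.choose_spec hP'
    have h1 := (hiff' (Classical.choose hP')).mpr (Or.inr rfl)
    have h2 := (hiff (Classical.choose hP')).mp h1
    rcases h2 with h | h
    · exact absurd h hne
    · exact h
  simp only [hpin, hx, Option.getD_some, min_eq_left hw]
  split_ifs <;> rfl

lemma notP_of_three {a b c : ℤ} (hab : a ≠ b) (hac : a ≠ c) (hbc : b ≠ c)
    (ha : x a ≠ none) (hb : x b ≠ none) (hc : x c ≠ none) :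
    ¬ ∃ i : ℤ, i ≠ 0 ∧ (∀ z : ℤ, x z ≠ none ↔ (z = 0 ∨ z = i)) := by
  rintro ⟨i, hi0, hiff⟩
  have h1 := (hiff a).mp ha
  have h2 := (hiff b).mp hb
  have h3 := (hiff c).mp hc
  omega

/-- Evaluation of the mirror-extension branch. -/
lemma strat_M1 (hW : ¬ WG n x) {p₀ : ℤ} {m₀ : ℕ} (h1 : 1 ≤ m₀)
    (hiff : ∀ z : ℤ, x z ≠ none ↔ (p₀ ≤ z ∧ z ≤ p₀ + (2 * m₀ + 1)))
    (hγ : p₀ + m₀ = 2 ∨ p₀ + m₀ = -2 ∨ p₀ + m₀ + 1 = 2 ∨ p₀ + m₀ + 1 = -2) :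
    strat n x = (if p₀ + m₀ = 2 ∨ p₀ + m₀ = -2 then
      some (2 * (p₀ + m₀) - (p₀ + 2 * m₀ + 1), min ((x (p₀ + 2 * m₀ + 1)).getD 0) n)
    else
      some (2 * (p₀ + m₀ + 1) - p₀, min ((x p₀).getD 0) n)) := by
  have hcol : ∀ z : ℤ, p₀ ≤ z → z ≤ p₀ + (2 * m₀ + 1) → x z ≠ none := by
    intro z hz1 hz2; exact (hiff z).mpr ⟨hz1, hz2⟩
  have hE : ¬ ∀ z, x z = none := fun hE => hcol p₀ le_rfl (by omega) (hE p₀)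
  have hP : ¬ ∃ i : ℤ, i ≠ 0 ∧ (∀ z : ℤ, x z ≠ none ↔ (z = 0 ∨ z = i)) := by
    refine notP_of_three (a := p₀) (b := p₀ + 1) (c := p₀ + 2) (by omega) (by omega) (by omega)
      (hcol _ le_rfl (by omega)) (hcol _ (by omega) (by omega)) (hcol _ (by omega) (by omega))
  have hM : ∃ pm : ℤ × ℕ, 1 ≤ pm.2 ∧
      (∀ z : ℤ, x z ≠ none ↔ (pm.1 ≤ z ∧ z ≤ pm.1 + (2 * pm.2 + 1))) ∧
      (pm.1 + pm.2 = 2 ∨ pm.1 + pm.2 = -2 ∨ pm.1 + pm.2 + 1 = 2 ∨ pm.1 + pm.2 + 1 = -2) :=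
    ⟨(p₀, m₀), h1, hiff, hγ⟩
  rw [strat, dif_neg hW, if_neg hE, dif_neg hP, dif_pos hM]
  have hpin : Classical.choose hM = (p₀, m₀) := by
    obtain ⟨h1', hiff', hγ'⟩ := Classical.choose_spec hM
    set p' := (Classical.choose hM).1 with hp'
    set m' := (Classical.choose hM).2 with hm'
    have e1 := (hiff' p').mpr ⟨le_rfl, by omega⟩
    have e2 := (hiff' (p' + (2 * m' + 1))).mpr ⟨by omega, le_rfl⟩
    have e3 := (hiff p₀).mpr ⟨le_rfl, by omega⟩
    have e4 := (hiff (p₀ + (2 * m₀ + 1))).mpr ⟨by omega, le_rfl⟩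
    have f1 := (hiff p').mp e1
    have f2 := (hiff (p' + (2 * m' + 1))).mp e2
    have f3 := (hiff' p₀).mp e3
    have f4 := (hiff' (p₀ + (2 * m₀ + 1))).mp e4
    have : p' = p₀ ∧ m' = m₀ := by omega
    rw [hp', hm'] at this
    exact Prod.ext this.1 this.2
  simp only [hpin]

/-- Evaluation of the punish branch. -/
lemma strat_J (hW : ¬ WG n x) {p₀ j₀ : ℤ} {k₀ : ℕ} (h2 : 2 ≤ k₀)
    (hout : j₀ < p₀ - 1 ∨ p₀ + 2 * k₀ + 1 < j₀)
    (hγ : p₀ + k₀ = 2 ∨ p₀ + k₀ = -2)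
    (hj1 : x (j₀ - 1) = none) (hj2 : x (j₀ + 1) = none)
    (hiff : ∀ z : ℤ, x z ≠ none ↔ ((p₀ ≤ z ∧ z ≤ p₀ + 2 * k₀) ∨ z = j₀)) :
    strat n x = (if p₀ + (k₀ : ℤ) < j₀ then some (j₀ + 1, min ((x j₀).getD 0) n)
      else some (j₀ - 1, min ((x j₀).getD 0) n)) := by
  have hcol : ∀ z : ℤ, p₀ ≤ z → z ≤ p₀ + 2 * k₀ → x z ≠ none := by
    intro z hz1 hz2; exact (hiff z).mpr (Or.inl ⟨hz1, hz2⟩)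
  have hE : ¬ ∀ z, x z = none := fun hE => hcol p₀ le_rfl (by omega) (hE p₀)
  have hP : ¬ ∃ i : ℤ, i ≠ 0 ∧ (∀ z : ℤ, x z ≠ none ↔ (z = 0 ∨ z = i)) := by
    refine notP_of_three (a := p₀) (b := p₀ + 1) (c := p₀ + 2) (by omega) (by omega) (by omega)
      (hcol _ le_rfl (by omega)) (hcol _ (by omega) (by omega)) (hcol _ (by omega) (by omega))
  have hM : ¬ ∃ pm : ℤ × ℕ, 1 ≤ pm.2 ∧
      (∀ z : ℤ, x z ≠ none ↔ (pm.1 ≤ z ∧ z ≤ pm.1 + (2 * pm.2 + 1))) ∧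
      (pm.1 + pm.2 = 2 ∨ pm.1 + pm.2 = -2 ∨ pm.1 + pm.2 + 1 = 2 ∨ pm.1 + pm.2 + 1 = -2) := by
    rintro ⟨⟨p', m'⟩, h1', hiff', -⟩
    have e1 := (hiff' p₀).mp (hcol p₀ le_rfl (by omega))
    have e2 := (hiff' j₀).mp ((hiff j₀).mpr (Or.inr rfl))
    have e3 : ¬ (p' ≤ j₀ - 1 ∧ j₀ - 1 ≤ p' + (2 * m' + 1)) := fun h => (hiff' (j₀ - 1)).mpr h hj1
    have e4 : ¬ (p' ≤ j₀ + 1 ∧ j₀ + 1 ≤ p' + (2 * m' + 1)) := fun h => (hiff' (j₀ + 1)).mpr h hj2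
    simp only at e1 e2 e3 e4
    omega
  have hJ : ∃ pkj : (ℤ × ℕ) × ℤ, 2 ≤ pkj.1.2 ∧
      (pkj.2 < pkj.1.1 - 1 ∨ pkj.1.1 + 2 * pkj.1.2 + 1 < pkj.2) ∧
      (pkj.1.1 + pkj.1.2 = 2 ∨ pkj.1.1 + pkj.1.2 = -2) ∧
      x (pkj.2 - 1) = none ∧ x (pkj.2 + 1) = none ∧
      (∀ z : ℤ, x z ≠ none ↔ ((pkj.1.1 ≤ z ∧ z ≤ pkj.1.1 + 2 * pkj.1.2) ∨ z = pkj.2)) :=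
    ⟨((p₀, k₀), j₀), h2, hout, hγ, hj1, hj2, hiff⟩
  rw [strat, dif_neg hW, if_neg hE, dif_neg hP, dif_neg hM, dif_pos hJ]
  have hpin : Classical.choose hJ = ((p₀, k₀), j₀) := by
    obtain ⟨h2', hout', hγ', hj1', hj2', hiff'⟩ := Classical.choose_spec hJ
    set p' := (Classical.choose hJ).1.1 with hp'
    set k' := (Classical.choose hJ).1.2 with hk'
    set j' := (Classical.choose hJ).2 with hj'
    -- first, j' = j₀
    have hcolj' := (hiff j').mp ((hiff' j').mpr (Or.inr rfl))
    have hcolj := (hiff' j₀).mp ((hiff j₀).mpr (Or.inr rfl))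
    have hjeq : j' = j₀ := by
      by_contra hne
      -- then j' lies in the interval [p₀, p₀+2k₀]; but its neighbours are empty
      have hj'in : p₀ ≤ j' ∧ j' ≤ p₀ + 2 * k₀ := by
        rcases hcolj' with h | h
        · exact h
        · exact absurd h hne
      have hn1 : ¬ ((p₀ ≤ j' - 1 ∧ j' - 1 ≤ p₀ + 2 * k₀) ∨ j' - 1 = j₀) :=
        fun h => (hiff (j' - 1)).mpr h hj1'
      have hn2 : ¬ ((p₀ ≤ j' + 1 ∧ j' + 1 ≤ p₀ + 2 * k₀) ∨ j' + 1 = j₀) :=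
        fun h => (hiff (j' + 1)).mpr h hj2'
      -- j₀ in the primed decomposition
      have hj0in : (p' ≤ j₀ ∧ j₀ ≤ p' + 2 * k') ∨ j₀ = j' := hcolj
      have hn3 : ¬ ((p' ≤ j₀ - 1 ∧ j₀ - 1 ≤ p' + 2 * k') ∨ j₀ - 1 = j') :=
        fun h => (hiff' (j₀ - 1)).mpr h hj1
      have hn4 : ¬ ((p' ≤ j₀ + 1 ∧ j₀ + 1 ≤ p' + 2 * k') ∨ j₀ + 1 = j') :=
        fun h => (hiff' (j₀ + 1)).mpr h hj2
      omega
    have hints : p' = p₀ ∧ k' = k₀ := by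
      have e1 := (hiff p').mp ((hiff' p').mpr (Or.inl ⟨le_rfl, by omega⟩))
      have e2 := (hiff (p' + 2 * k')).mp ((hiff' (p' + 2 * k')).mpr (Or.inl ⟨by omega, le_rfl⟩))
      have e3 := (hiff' p₀).mp ((hiff p₀).mpr (Or.inl ⟨le_rfl, by omega⟩))
      have e4 := (hiff' (p₀ + 2 * k₀)).mp ((hiff (p₀ + 2 * k₀)).mpr (Or.inl ⟨by omega, le_rfl⟩))
      omega
    rw [hp', hk', hj'] at *
    exact Prod.ext (Prod.ext hints.1 hints.2) hjeq
  simp only [hpin]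

end StratLemmas


section Boards

/-- The symmetric solid board of radius `k` around `γ`. -/
noncomputable def Sb (γ : ℤ) (k : ℕ) (c : ℕ → ℕ) : BoardZ := fun z =>
  if (z - γ).natAbs ≤ k then some (c (z - γ).natAbs) else none

lemma Sb_ne_none (γ : ℤ) (k : ℕ) (c : ℕ → ℕ) (z : ℤ) :
    Sb γ k c z ≠ none ↔ (γ - k ≤ z ∧ z ≤ γ + k) := by
  unfold Sb
  split_ifs with h
  · simp only [ne_eq, reduceCtorEq, not_false_eq_true, true_iff]; omega
  · simp only [ne_eq, not_true_eq_false, false_iff]; omega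

lemma Sb_val {γ : ℤ} {k : ℕ} {c : ℕ → ℕ} {z : ℤ} (h : (z - γ).natAbs ≤ k) :
    Sb γ k c z = some (c (z - γ).natAbs) := if_pos h

lemma Sb_none {γ : ℤ} {k : ℕ} {c : ℕ → ℕ} {z : ℤ} (h : ¬ (z - γ).natAbs ≤ k) :
    Sb γ k c z = none := if_neg h

/-- Extending a symmetric board by a matched pair of cells. -/
lemma Sb_extend (γ : ℤ) (k : ℕ) (c : ℕ → ℕ) (w : ℕ) :
    updB (updB (Sb γ k c) (γ + (k + 1)) w) (γ - (k + 1)) w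
      = Sb γ (k + 1) (fun j => if j = k + 1 then w else c j) := by
  funext z
  rw [updB_apply, updB_apply]
  unfold Sb
  by_cases h1 : z = γ - (k + 1)
  · have hna : (z - γ).natAbs = k + 1 := by omega
    rw [hna, if_pos h1]
    simp
  · rw [if_neg h1]
    by_cases h2 : z = γ + (k + 1)
    · have hna : (z - γ).natAbs = k + 1 := by omega
      rw [hna, if_pos h2]
      simp
    · rw [if_neg h2]
      by_cases h3 : (z - γ).natAbs ≤ k
      · rw [if_pos h3, if_pos (by omega)]
        have : (z - γ).natAbs ≠ k + 1 := by omega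
        simp [this]
      · rw [if_neg h3, if_neg (by omega)]

end Boards

/-- If a same-coloured domino sits at `y, y+d` and a suitable neighbour is empty,
then A can complete a triple: the win-guard holds. -/
lemma WG_of_domino {n : ℕ} {x : BoardZ} {y d : ℤ} {w : ℕ} (hd : d = 1 ∨ d = -1)
    (hw : w ≤ n) (h0 : x y = some w) (h1 : x (y + d) = some w)
    {e : ℤ} (he : e = y - d ∨ e = y + 2 * d) (hee : x e = none) :
    WG n x := by
  refine ⟨(e, w), ⟨hee, by omega⟩, ?_⟩
  have hey : e ≠ y := by rcases hd with h | h <;> rcases he with h' | h' <;> omega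
  have heyd : e ≠ y + d := by rcases hd with h | h <;> rcases he with h' | h' <;> omega
  have hy : updB x e w y = some w := by rw [updB_apply, if_neg (by omega)]; exact h0
  have hyd : updB x e w (y + d) = some w := by rw [updB_apply, if_neg (by omega)]; exact h1
  have hE : updB x e w e = some w := by rw [updB_apply, if_pos rfl]
  rcases hd with rfl | rfl
  · rcases he with rfl | rfl
    · refine final_triple hw (t := y - 1) ?_ ?_ ?_
      · exact hE
      · rw [show y - 1 + 1 = y by ring]; exact hy
      · rw [show y - 1 + 2 = y + 1 by ring]; exact hyd
    · refine final_triple hw (t := y) ?_ ?_ ?_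
      · exact hy
      · exact hyd
      · rw [show y + 2 = y + 2 * 1 by ring]; exact hE
  · rcases he with rfl | rfl
    · refine final_triple hw (t := y + -1) ?_ ?_ ?_
      · exact hyd
      · rw [show y + -1 + 1 = y by ring]; exact hy
      · rw [show y + -1 + 2 = y - -1 by ring]; exact hE
    · refine final_triple hw (t := y + 2 * -1) ?_ ?_ ?_
      · exact hE
      · rw [show y + 2 * -1 + 1 = y + -1 by ring]; exact hyd
      · rw [show y + 2 * -1 + 2 = y by ring]; exact hy

/-- The strategy `strat n` never passes. -/
lemma strat_noPass (n : ℕ) : NoPassStrategy (n + 1) (strat n) := by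
  intro x hx
  by_cases hW : WG n x
  · rw [strat_W hW]
    obtain ⟨⟨h1, h2⟩, -⟩ := Classical.choose_spec hW
    exact ⟨h1, h2⟩
  by_cases hE : ∀ z, x z = none
  · rw [strat_empty hW hE]
    exact ⟨hE 0, by omega⟩
  rw [strat, dif_neg hW, if_neg hE]
  by_cases hP : ∃ i : ℤ, i ≠ 0 ∧ (∀ z : ℤ, x z ≠ none ↔ (z = 0 ∨ z = i))
  · rw [dif_pos hP]
    obtain ⟨hi0, hiff⟩ := Classical.choose_spec hP
    by_cases h1 : Classical.choose hP = 1 ∨ Classical.choose hP = -1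
    · rw [if_pos h1]
      refine ⟨?_, by omega⟩
      by_contra hne
      have := (hiff _).mp hne
      omega
    · rw [if_neg h1]
      by_cases h2 : 0 < Classical.choose hP
      · rw [if_pos h2]
        refine ⟨?_, by omega⟩
        by_contra hne
        have := (hiff _).mp hne
        omega
      · rw [if_neg h2]
        refine ⟨?_, by omega⟩
        by_contra hne
        have := (hiff _).mp hne
        omega
  rw [dif_neg hP]
  by_cases hM : ∃ pm : ℤ × ℕ, 1 ≤ pm.2 ∧
      (∀ z : ℤ, x z ≠ none ↔ (pm.1 ≤ z ∧ z ≤ pm.1 + (2 * pm.2 + 1))) ∧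
      (pm.1 + pm.2 = 2 ∨ pm.1 + pm.2 = -2 ∨ pm.1 + pm.2 + 1 = 2 ∨ pm.1 + pm.2 + 1 = -2)
  · rw [dif_pos hM]
    obtain ⟨h1, hiff, hγ⟩ := Classical.choose_spec hM
    by_cases hg : (Classical.choose hM).1 + ((Classical.choose hM).2 : ℤ) = 2 ∨
        (Classical.choose hM).1 + ((Classical.choose hM).2 : ℤ) = -2
    · rw [if_pos hg]
      refine ⟨?_, by omega⟩
      by_contra hne
      have := (hiff _).mp hne
      omega
    · rw [if_neg hg]
      refine ⟨?_, by omega⟩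
      by_contra hne
      have := (hiff _).mp hne
      omega
  rw [dif_neg hM]
  by_cases hJ : ∃ pkj : (ℤ × ℕ) × ℤ, 2 ≤ pkj.1.2 ∧
      (pkj.2 < pkj.1.1 - 1 ∨ pkj.1.1 + 2 * pkj.1.2 + 1 < pkj.2) ∧
      (pkj.1.1 + pkj.1.2 = 2 ∨ pkj.1.1 + pkj.1.2 = -2) ∧
      x (pkj.2 - 1) = none ∧ x (pkj.2 + 1) = none ∧
      (∀ z : ℤ, x z ≠ none ↔ ((pkj.1.1 ≤ z ∧ z ≤ pkj.1.1 + 2 * pkj.1.2) ∨ z = pkj.2))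
  · rw [dif_pos hJ]
    obtain ⟨h1, hout, hγ, hj1, hj2, hiff⟩ := Classical.choose_spec hJ
    by_cases hg : (Classical.choose hJ).1.1 + ((Classical.choose hJ).1.2 : ℤ) < (Classical.choose hJ).2
    · rw [if_pos hg]
      exact ⟨hj2, by omega⟩
    · rw [if_neg hg]
      exact ⟨hj1, by omega⟩
  rw [dif_neg hJ]
  by_cases hD : ∃ i : ℤ, x i = none
  · rw [dif_pos hD]
    exact ⟨Classical.choose_spec hD, by omega⟩
  · exact absurd hx hD

end Pal19

/-- For every `n ≥ 1`, player `A` has a winning strategy in the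
no-pass Domino game `Γ*(𝒜_n, ℱ_n, ℤ)` with alphabet `𝒜_n = {0, …, n}` and forbidden
patterns the palindromes of length `2n+1` and the triples `iii`. -/
theorem aWins_noPass_palindromes (n : ℕ) (hn : 1 ≤ n) :
    ∃ stA : StrategyZ, NoPassStrategy (n + 1) stA ∧
      ∀ stB : StrategyZ, NoPassStrategy (n + 1) stB →
        ∃ t : ℕ, isFinalZ (Fpal n) (playZ (n + 1) alt stA stB t) := by
  classical
  refine ⟨Pal19.strat n, Pal19.strat_noPass n, ?_⟩
  intro stB hstB
  set X : ℕ → BoardZ := playZ (n + 1) alt (Pal19.strat n) stB with hXdef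
  suffices h : ∃ t : ℕ, isFinalZ (Fpal n) (X t) by exact h
  -- step equations
  have hstepA : ∀ t : ℕ, t % 2 = 0 → X (t + 1) = stepZ (n + 1) (Pal19.strat n) (X t) := by
    intro t ht
    have halt : alt t = Player.A := by unfold alt; rw [if_pos ht]
    have h0 : X (t + 1) = stepZ (n + 1)
        (match alt t with | Player.A => Pal19.strat n | Player.B => stB) (X t) := rfl
    rw [h0, halt]
  have hstepB : ∀ t : ℕ, t % 2 = 1 → X (t + 1) = stepZ (n + 1) stB (X t) := by
    intro t ht
    have halt : alt t = Player.B := by unfold alt; rw [if_neg (by omega)]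
    have h0 : X (t + 1) = stepZ (n + 1)
        (match alt t with | Player.A => Pal19.strat n | Player.B => stB) (X t) := rfl
    rw [h0, halt]
  -- if the win-guard holds at an even time, A wins next move
  have doneW : ∀ t : ℕ, t % 2 = 0 → Pal19.WG n (X t) → ∃ s, isFinalZ (Fpal n) (X s) := by
    intro t ht hW
    exact ⟨t + 1, by rw [hstepA t ht]; exact Pal19.strat_W_step hW⟩
  -- B's move at an odd time
  have Bmove : ∀ t : ℕ, t % 2 = 1 → ∀ z₀ : ℤ, X t z₀ = none →
      ∃ i a, X t i = none ∧ a < n + 1 ∧ X (t + 1) = Pal19.updB (X t) i a := by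
    intro t ht z₀ hz₀
    obtain ⟨i, a, hi, ha, hstep⟩ := Pal19.Bstep hstB (X t) ⟨z₀, hz₀⟩
    exact ⟨i, a, hi, ha, by rw [hstepB t ht]; exact hstep⟩
  -- A's planned move at an even time
  have AstepEq : ∀ t : ℕ, t % 2 = 0 → ∀ i : ℤ, ∀ a : ℕ,
      Pal19.strat n (X t) = some (i, a) → X t i = none → a < n + 1 →
      X (t + 1) = Pal19.updB (X t) i a := by
    intro t ht i a hst hi ha
    rw [hstepA t ht]
    exact Pal19.stepZ_eq hst hi ha
  -- the punishment lemma: a domino with two empty extension cells wins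
  have PL : ∀ τ : ℕ, τ % 2 = 1 → ∀ y d : ℤ, ∀ w : ℕ, (d = 1 ∨ d = -1) → w ≤ n →
      X τ y = some w → X τ (y + d) = some w → X τ (y - d) = none →
      X τ (y + 2 * d) = none → ∃ s, isFinalZ (Fpal n) (X s) := by
    intro τ hτ y d w hd hw hy hyd hm1 hm2
    obtain ⟨i, a, hi, ha, hupd⟩ := Bmove τ hτ (y - d) hm1
    have hiy : i ≠ y := by intro h; rw [h, hy] at hi; cases hi
    have hiyd : i ≠ y + d := by intro h; rw [h, hyd] at hi; cases hi
    have hy' : X (τ + 1) y = some w := by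
      rw [hupd, Pal19.updB_apply, if_neg (fun h => hiy h.symm)]; exact hy
    have hyd' : X (τ + 1) (y + d) = some w := by
      rw [hupd, Pal19.updB_apply, if_neg (fun h => hiyd h.symm)]; exact hyd
    refine doneW (τ + 1) (by omega) ?_
    by_cases he : i = y - d
    · refine Pal19.WG_of_domino hd hw hy' hyd' (Or.inr rfl) ?_
      rw [hupd, Pal19.updB_apply, if_neg (by rcases hd with h | h <;> omega)]
      exact hm2
    · refine Pal19.WG_of_domino hd hw hy' hyd' (Or.inl rfl) ?_
      rw [hupd, Pal19.updB_apply, if_neg (fun h => he h.symm)]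
      exact hm1
  -- the main loop
  have loop : ∀ d : ℕ, ∀ k τ : ℕ, ∀ γ : ℤ, ∀ c : ℕ → ℕ, (γ = 2 ∨ γ = -2) → 2 ≤ k →
      k + d = n → τ % 2 = 1 → (∀ j, c j ≤ n) → X τ = Pal19.Sb γ k c →
      ∃ s, isFinalZ (Fpal n) (X s) := by
    intro d
    induction d with
    | zero =>
      intro k τ γ c hγ hk2 hkd hτ hc hXτ
      have hkn : k = n := by omega
      subst hkn
      refine ⟨τ, Pal19.final_pal (γ := γ) (c := c) hc ?_⟩
      intro l hl
      rw [hXτ, Pal19.Sb_val (by omega)]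
      rw [show γ - (k : ℤ) + l - γ = (l : ℤ) - k from by ring]
    | succ d ih =>
      intro k τ γ c hγ hk2 hkd hτ hc hXτ
      have hempty : X τ (γ + (k + 1)) = none := by
        rw [hXτ]; exact Pal19.Sb_none (by omega)
      obtain ⟨i, w, hi, hw, hupd⟩ := Bmove τ hτ _ hempty
      have hout : ¬ (i - γ).natAbs ≤ k := by
        intro h
        rw [hXτ, Pal19.Sb_val h] at hi
        cases hi
      by_cases hW : Pal19.WG n (X (τ + 1))
      · exact doneW (τ + 1) (by omega) hW
      have hXτ1 : X (τ + 1) = Pal19.updB (Pal19.Sb γ k c) i w := by rw [hupd, hXτ]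
      have hiffgen : ∀ z : ℤ, X (τ + 1) z ≠ none ↔ (z = i ∨ (γ - k ≤ z ∧ z ≤ γ + k)) := by
        intro z
        rw [hXτ1, Pal19.updB_ne_none, Pal19.Sb_ne_none]
      have hvali : X (τ + 1) i = some w := by
        rw [hXτ1, Pal19.updB_apply, if_pos rfl]
      have hvalSb : ∀ z : ℤ, z ≠ i → X (τ + 1) z = Pal19.Sb γ k c z := by
        intro z hz
        rw [hXτ1, Pal19.updB_apply, if_neg hz]
      by_cases hfr : i = γ + (k + 1)
      · -- fill on the right; A mirrors on the left
        have hiff : ∀ z : ℤ, X (τ + 1) z ≠ none ↔ ((γ - k) ≤ z ∧ z ≤ (γ - k) + (2 * k + 1)) := by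
          intro z; rw [hiffgen z]; omega
        have hstrat := Pal19.strat_M1 (n := n) hW (p₀ := γ - k) (m₀ := k) (by omega) hiff
          (by omega)
        have hcond : γ - (k : ℤ) + k = 2 ∨ γ - (k : ℤ) + k = -2 := by omega
        rw [if_pos hcond] at hstrat
        have hcell : γ - (k : ℤ) + 2 * k + 1 = i := by omega
        rw [hcell, hvali] at hstrat
        have hstrat' : Pal19.strat n (X (τ + 1)) =
            some (γ - (k + 1), w) := by
          rw [hstrat]
          congr 1
          refine Prod.ext ?_ ?_
          · show 2 * (γ - (k : ℤ) + k) - i = γ - ((k : ℤ) + 1)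
            omega
          · show min ((some w).getD 0) n = w
            simp
            omega
        have hcellempty : X (τ + 1) (γ - ((k : ℤ) + 1)) = none := by
          rw [hvalSb _ (by omega)]
          exact Pal19.Sb_none (by omega)
        have hX2 : X (τ + 1 + 1) = Pal19.updB (X (τ + 1)) (γ - ((k : ℤ) + 1)) w :=
          AstepEq (τ + 1) (by omega) _ _ hstrat' hcellempty hw
        have hX2' : X (τ + 2) = Pal19.Sb γ (k + 1) (fun j => if j = k + 1 then w else c j) := by
          have : τ + 1 + 1 = τ + 2 := by omega
          rw [← this, hX2, hXτ1, hfr]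
          rw [show γ + ((k : ℤ) + 1) = γ + (k + 1 : ℕ) from by push_cast; ring,
            show γ - ((k : ℤ) + 1) = γ - (k + 1 : ℕ) from by push_cast; ring]
          exact Pal19.Sb_extend γ k c w
        refine ih (k + 1) (τ + 2) γ _ hγ (by omega) (by omega) (by omega) ?_ hX2'
        intro j
        split_ifs
        · omega
        · exact hc j
      by_cases hfl : i = γ - (k + 1)
      · -- fill on the left; A mirrors on the right
        have hiff : ∀ z : ℤ, X (τ + 1) z ≠ none ↔
            ((γ - (k + 1)) ≤ z ∧ z ≤ (γ - (k + 1)) + (2 * k + 1)) := by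
          intro z; rw [hiffgen z]; omega
        have hstrat := Pal19.strat_M1 (n := n) hW (p₀ := γ - (k + 1)) (m₀ := k) (by omega) hiff
          (by omega)
        have hcond : ¬ (γ - ((k : ℤ) + 1) + k = 2 ∨ γ - ((k : ℤ) + 1) + k = -2) := by omega
        rw [if_neg hcond] at hstrat
        have hcell : γ - ((k : ℤ) + 1) = i := by omega
        rw [hcell, hvali] at hstrat
        have hstrat' : Pal19.strat n (X (τ + 1)) = some (γ + ((k : ℤ) + 1), w) := by
          rw [hstrat]
          congr 1
          refine Prod.ext ?_ ?_
          · show 2 * (i + (k : ℤ) + 1) - i = γ + ((k : ℤ) + 1)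
            omega
          · show min ((some w).getD 0) n = w
            simp
            omega
        have hcellempty : X (τ + 1) (γ + ((k : ℤ) + 1)) = none := by
          rw [hvalSb _ (by omega)]
          exact Pal19.Sb_none (by omega)
        have hX2 : X (τ + 1 + 1) = Pal19.updB (X (τ + 1)) (γ + ((k : ℤ) + 1)) w :=
          AstepEq (τ + 1) (by omega) _ _ hstrat' hcellempty hw
        have hX2' : X (τ + 2) = Pal19.Sb γ (k + 1) (fun j => if j = k + 1 then w else c j) := by
          have h21 : τ + 1 + 1 = τ + 2 := by omega
          rw [← h21, hX2, hXτ1, hfl]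
          rw [show γ - ((k : ℤ) + 1) = γ - (k + 1 : ℕ) from by push_cast; ring,
            show γ + ((k : ℤ) + 1) = γ + (k + 1 : ℕ) from by push_cast; ring]
          rw [Pal19.updB_comm _ _ _ _ _ (by omega)]
          exact Pal19.Sb_extend γ k c w
        refine ih (k + 1) (τ + 2) γ _ hγ (by omega) (by omega) (by omega) ?_ hX2'
        intro j
        split_ifs
        · omega
        · exact hc j
      · -- junk move: punish
        have hfar : ¬ (i - γ).natAbs ≤ k + 1 := by omega
        have hiso1 : X (τ + 1) (i - 1) = none := by
          rw [hvalSb _ (by omega)]; exact Pal19.Sb_none (by omega)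
        have hiso2 : X (τ + 1) (i + 1) = none := by
          rw [hvalSb _ (by omega)]; exact Pal19.Sb_none (by omega)
        have hiff : ∀ z : ℤ, X (τ + 1) z ≠ none ↔
            (((γ - k) ≤ z ∧ z ≤ (γ - k) + 2 * k) ∨ z = i) := by
          intro z; rw [hiffgen z]; omega
        have hstrat := Pal19.strat_J (n := n) hW (p₀ := γ - k) (k₀ := k) (j₀ := i) hk2
          (by omega) (by omega) hiso1 hiso2 hiff
        by_cases hside : γ < i
        · have hcond : γ - (k : ℤ) + k < i := by omega
          rw [if_pos hcond, hvali] at hstrat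
          have hstrat' : Pal19.strat n (X (τ + 1)) = some (i + 1, w) := by
            rw [hstrat]
            congr 2
            show min ((some w).getD 0) n = w
            simp
            omega
          have hcellempty : X (τ + 1) (i + 1) = none := hiso2
          have hX2 : X (τ + 1 + 1) = Pal19.updB (X (τ + 1)) (i + 1) w :=
            AstepEq (τ + 1) (by omega) _ _ hstrat' hcellempty hw
          refine PL (τ + 2) (by omega) i 1 w (Or.inl rfl) (by omega) ?_ ?_ ?_ ?_
          · rw [show τ + 2 = τ + 1 + 1 from by omega, hX2, Pal19.updB_apply,
              if_neg (by omega)]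
            exact hvali
          · rw [show τ + 2 = τ + 1 + 1 from by omega, hX2, Pal19.updB_apply, if_pos rfl]
          · rw [show τ + 2 = τ + 1 + 1 from by omega, hX2, Pal19.updB_apply,
              if_neg (by omega), hvalSb _ (by omega)]
            exact Pal19.Sb_none (by omega)
          · rw [show τ + 2 = τ + 1 + 1 from by omega, hX2, Pal19.updB_apply,
              if_neg (by omega), hvalSb _ (by omega)]
            exact Pal19.Sb_none (by omega)
        · have hcond : ¬ (γ - (k : ℤ) + k < i) := by omega
          rw [if_neg hcond, hvali] at hstrat
          have hstrat' : Pal19.strat n (X (τ + 1)) = some (i - 1, w) := by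
            rw [hstrat]
            congr 2
            show min ((some w).getD 0) n = w
            simp
            omega
          have hcellempty : X (τ + 1) (i - 1) = none := hiso1
          have hX2 : X (τ + 1 + 1) = Pal19.updB (X (τ + 1)) (i - 1) w :=
            AstepEq (τ + 1) (by omega) _ _ hstrat' hcellempty hw
          refine PL (τ + 2) (by omega) i (-1) w (Or.inr rfl) (by omega) ?_ ?_ ?_ ?_
          · rw [show τ + 2 = τ + 1 + 1 from by omega, hX2, Pal19.updB_apply,
              if_neg (by omega)]
            exact hvali
          · rw [show τ + 2 = τ + 1 + 1 from by omega, hX2, Pal19.updB_apply,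
              if_pos (by omega : i + -1 = i - 1)]
          · rw [show τ + 2 = τ + 1 + 1 from by omega, hX2, Pal19.updB_apply,
              if_neg (by omega), hvalSb _ (by omega)]
            exact Pal19.Sb_none (by omega)
          · rw [show τ + 2 = τ + 1 + 1 from by omega, hX2, Pal19.updB_apply,
              if_neg (by omega), hvalSb _ (by omega)]
            exact Pal19.Sb_none (by omega)
  -- the opening
  by_cases hW0 : Pal19.WG n (X 0)
  · exact doneW 0 rfl hW0
  have hE0 : ∀ z, X 0 z = none := fun _ => rfl
  have hstrat0 : Pal19.strat n (X 0) = some (0, 0) := Pal19.strat_empty hW0 hE0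
  have hX1 : X 1 = Pal19.updB (X 0) 0 0 := AstepEq 0 rfl 0 0 hstrat0 rfl (by omega)
  have hX1v : ∀ z : ℤ, X 1 z = if z = 0 then some 0 else none := by
    intro z; rw [hX1, Pal19.updB_apply]; rfl
  obtain ⟨i1, w1, hi1, hw1, hX2⟩ := Bmove 1 rfl 5 (by rw [hX1v]; norm_num)
  have hi1ne : i1 ≠ 0 := by
    intro h; rw [h, hX1v 0, if_pos rfl] at hi1; cases hi1
  have hX2v : ∀ z : ℤ, X 2 z = if z = i1 then some w1 else if z = 0 then some 0 else none := by
    intro z; rw [hX2, Pal19.updB_apply, hX1v]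
  by_cases hW2 : Pal19.WG n (X 2)
  · exact doneW 2 rfl hW2
  have hiff2 : ∀ z : ℤ, X 2 z ≠ none ↔ (z = 0 ∨ z = i1) := by
    intro z
    rw [hX2v]
    split_ifs with h h'
    · simp [h]
    · simp [h']
    · simp [h, h']
  have hx2i : X 2 i1 = some w1 := by rw [hX2v, if_pos rfl]
  have hstrat2 := Pal19.strat_P2 hW2 hi1ne hiff2 hx2i (by omega)
  by_cases hone : i1 = 1 ∨ i1 = -1
  · -- B answered next to A's stone: main line
    rw [if_pos hone] at hstrat2
    have h3empty : X 2 (3 * i1) = none := by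
      rw [hX2v, if_neg (by omega), if_neg (by omega)]
    have hX3 : X 3 = Pal19.updB (X 2) (3 * i1) w1 := AstepEq 2 rfl _ _ hstrat2 h3empty hw1
    have hX3v : ∀ z : ℤ, X 3 z = if z = 3 * i1 then some w1 else if z = i1 then some w1
        else if z = 0 then some 0 else none := by
      intro z; rw [hX3, Pal19.updB_apply, hX2v]
    obtain ⟨i2, w2, hi2, hw2, hX4⟩ := Bmove 3 rfl 5
      (by rw [hX3v, if_neg (by omega), if_neg (by omega), if_neg (by omega)])
    have hi2ne : i2 ≠ 3 * i1 ∧ i2 ≠ i1 ∧ i2 ≠ 0 := by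
      refine ⟨?_, ?_, ?_⟩ <;> intro h <;> rw [h, hX3v] at hi2
      · rw [if_pos rfl] at hi2; cases hi2
      · rw [if_neg (by omega), if_pos rfl] at hi2; cases hi2
      · rw [if_neg (by omega), if_neg (by omega), if_pos rfl] at hi2; cases hi2
    have hX4v : ∀ z : ℤ, X 4 z = if z = i2 then some w2 else if z = 3 * i1 then some w1
        else if z = i1 then some w1 else if z = 0 then some 0 else none := by
      intro z; rw [hX4, Pal19.updB_apply, hX3v]
    by_cases hW4 : Pal19.WG n (X 4)
    · exact doneW 4 rfl hW4
    by_cases hblock : i2 = 2 * i1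
    · -- B blocked in the middle; the palindrome centre is created
      subst hblock
      rcases Nat.lt_or_ge n 2 with hn1 | hn2
      · -- n = 1 : the window (i1, 2i1, 3i1) is already a palindrome
        have hn1' : n = 1 := by omega
        refine ⟨4, ?_⟩
        rw [hn1']
        refine Pal19.final_pal (n := 1) (γ := 2 * i1) (x := X 4)
          (c := fun j => if j = 0 then w2 else w1) (fun j => by split_ifs <;> omega) ?_
        intro l hl
        interval_cases l <;> rcases hone with h1 | h1 <;> subst h1 <;> rw [hX4v] <;> norm_num
      · -- n ≥ 2 : A closes the solid symmetric interval of radius 2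
        have hsupp4 : ∀ z : ℤ, X 4 z ≠ none ↔ (z = 2 * i1 ∨ z = 3 * i1 ∨ z = i1 ∨ z = 0) := by
          intro z
          rw [hX4v]
          split_ifs with ha hb hc hd
          · simp [ha]
          · simp [hb]
          · simp [hc]
          · simp [hd]
          · simp [ha, hb, hc, hd]
        have hiff4 : ∀ z : ℤ, X 4 z ≠ none ↔
            ((min 0 (3 * i1)) ≤ z ∧ z ≤ (min 0 (3 * i1)) + (2 * 1 + 1)) := by
          intro z
          rw [hsupp4 z]
          rcases hone with h1 | h1 <;> subst h1 <;> omega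
        have hstrat4 := Pal19.strat_M1 (n := n) hW4 (p₀ := min 0 (3 * i1)) (m₀ := 1)
          le_rfl hiff4 (by rcases hone with h1 | h1 <;> subst h1 <;> norm_num)
        have hX5core : ∃ cc : ℕ → ℕ, (∀ j, cc j ≤ n) ∧ X 5 = Pal19.Sb (2 * i1) 2 cc := by
          refine ⟨fun j => if j = 0 then w2 else if j = 1 then w1 else 0, ?_, ?_⟩
          · intro j; dsimp only; split_ifs <;> omega
          rcases hone with h1 | h1 <;> subst h1
          · -- i1 = 1 : interval [0,3], mirror is cell 4 with colour 0
            rw [show min (0:ℤ) (3 * 1) = 0 from by norm_num] at hstrat4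
            rw [if_neg (by norm_num)] at hstrat4
            have hx40 : X 4 (0:ℤ) = some 0 := by
              rw [hX4v]
              norm_num
            rw [hx40] at hstrat4
            have hstrat4' : Pal19.strat n (X 4) = some (4, 0) := by
              rw [hstrat4]
              norm_num
            have h4empty : X 4 (4:ℤ) = none := by rw [hX4v]; norm_num
            have hX5 : X 5 = Pal19.updB (X 4) 4 0 := AstepEq 4 rfl _ _ hstrat4' h4empty (by omega)
            funext z
            rw [hX5, Pal19.updB_apply, hX4v]
            unfold Pal19.Sb
            by_cases hz : (z - 2 * 1).natAbs ≤ 2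
            · rw [if_pos hz]
              have hb1 : (0:ℤ) ≤ z := by omega
              have hb2 : z ≤ (4:ℤ) := by omega
              interval_cases z <;> norm_num
            · rw [if_neg hz]
              split_ifs <;> first | rfl | (exfalso; omega)
          · -- i1 = -1 : interval [-3,0], mirror is cell -4 with colour 0
            rw [show min (0:ℤ) (3 * (-1)) = -3 from by norm_num] at hstrat4
            rw [if_pos (by norm_num)] at hstrat4
            have hx40 : X 4 (-3 + 2 * ((1:ℕ):ℤ) + 1 : ℤ) = some 0 := by
              rw [show (-3 + 2 * ((1:ℕ):ℤ) + 1 : ℤ) = 0 from by omega, hX4v]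
              norm_num
            rw [hx40] at hstrat4
            have hstrat4' : Pal19.strat n (X 4) = some (-4, 0) := by
              rw [hstrat4]
              norm_num
            have h4empty : X 4 (-4:ℤ) = none := by rw [hX4v]; norm_num
            have hX5 : X 5 = Pal19.updB (X 4) (-4) 0 := AstepEq 4 rfl _ _ hstrat4' h4empty (by omega)
            funext z
            rw [hX5, Pal19.updB_apply, hX4v]
            unfold Pal19.Sb
            by_cases hz : (z - 2 * (-1)).natAbs ≤ 2
            · rw [if_pos hz]
              have hb1 : (-4:ℤ) ≤ z := by omega
              have hb2 : z ≤ (0:ℤ) := by omega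
              interval_cases z <;> norm_num
            · rw [if_neg hz]
              split_ifs <;> first | rfl | (exfalso; omega)
        obtain ⟨cc, hcc, hX5S⟩ := hX5core
        exact loop (n - 2) 2 5 (2 * i1) cc (by rcases hone with h1 | h1 <;> subst h1 <;> norm_num)
          le_rfl (by omega) rfl hcc hX5S
    · -- B did not block: A completes the triple i1,2i1,3i1
      refine doneW 4 rfl ?_
      have hmidempty : X 4 (2 * i1) = none := by
        rw [hX4v, if_neg (by omega), if_neg (by omega), if_neg (by omega), if_neg (by omega)]
      refine ⟨(2 * i1, w1), ⟨hmidempty, by omega⟩, ?_⟩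
      have hv1 : Pal19.updB (X 4) (2 * i1) w1 i1 = some w1 := by
        rw [Pal19.updB_apply, if_neg (by omega), hX4v, if_neg (by omega),
          if_neg (by omega), if_pos rfl]
      have hv2 : Pal19.updB (X 4) (2 * i1) w1 (2 * i1) = some w1 := by
        rw [Pal19.updB_apply, if_pos rfl]
      have hv3 : Pal19.updB (X 4) (2 * i1) w1 (3 * i1) = some w1 := by
        rw [Pal19.updB_apply, if_neg (by omega), hX4v, if_neg (by omega), if_pos rfl]
      rcases hone with h1 | h1 <;> subst h1
      · refine Pal19.final_triple (t := 1) (w := w1) (by omega) ?_ ?_ ?_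
        · simpa using hv1
        · simpa using hv2
        · simpa using hv3
      · refine Pal19.final_triple (t := -3) (w := w1) (by omega) ?_ ?_ ?_
        · simpa using hv3
        · simpa using hv2
        · simpa using hv1
  · -- B played an isolated stone: punish it
    rw [if_neg hone] at hstrat2
    by_cases hpos : 0 < i1
    · rw [if_pos hpos] at hstrat2
      have hnear : X 2 (i1 + 1) = none := by
        rw [hX2v, if_neg (by omega), if_neg (by omega)]
      have hX3 : X 3 = Pal19.updB (X 2) (i1 + 1) w1 := AstepEq 2 rfl _ _ hstrat2 hnear hw1
      refine PL 3 rfl i1 1 w1 (Or.inl rfl) (by omega) ?_ ?_ ?_ ?_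
      · rw [hX3, Pal19.updB_apply, if_neg (by omega), hX2v, if_pos rfl]
      · rw [hX3, Pal19.updB_apply, if_pos rfl]
      · rw [hX3, Pal19.updB_apply, if_neg (by omega), hX2v, if_neg (by omega),
          if_neg (by omega)]
      · rw [hX3, Pal19.updB_apply, if_neg (by omega), hX2v, if_neg (by omega),
          if_neg (by omega)]
    · rw [if_neg hpos] at hstrat2
      have hnear : X 2 (i1 - 1) = none := by
        rw [hX2v, if_neg (by omega), if_neg (by omega)]
      have hX3 : X 3 = Pal19.updB (X 2) (i1 - 1) w1 := AstepEq 2 rfl _ _ hstrat2 hnear hw1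
      refine PL 3 rfl i1 (-1) w1 (Or.inr rfl) (by omega) ?_ ?_ ?_ ?_
      · rw [hX3, Pal19.updB_apply, if_neg (by omega), hX2v, if_pos rfl]
      · rw [show i1 + (-1) = i1 - 1 from by ring, hX3, Pal19.updB_apply, if_pos rfl]
      · rw [show i1 - (-1) = i1 + 1 from by ring, hX3, Pal19.updB_apply, if_neg (by omega),
          hX2v, if_neg (by omega), if_neg (by omega)]
      · rw [show i1 + 2 * (-1) = i1 - 2 from by ring, hX3, Pal19.updB_apply,
          if_neg (by omega), hX2v, if_neg (by omega), if_neg (by omega)]
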